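/- In the setting of the previous statement, pull-back along the quotient map Z → Z/G defines a bijection between continuous sections of π̃ : Z̃/G → Z/G and G-equivariant continuous sections of π : Z̃ → Z. If moreover G is connected, then every continuous section of π is automatically G-equivariant. -/

import Mathlib

/-- Key local lemma: around every point of `Z` there is an open set `U` and a family of
local sections `ℓ w` of `π` (the sheet through `w`), compatible with the group action. -/
theorem stmt4_key {G Z Z' : Type*} [Group G] [TopologicalSpace G]
    [TopologicalSpace Z] [TopologicalSpace Z']
    [MulAction G Z] [MulAction G Z'] [ContinuousSMul G Z] [ContinuousSMul G Z']
    (π : Z' → Z) (hcov : IsCoveringMap π)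
    (hequiv : ∀ (g : G) (z : Z'), π (g • z) = g • π z)
    (hU : ∀ z₀ : Z, ∀ V ∈ nhds z₀, ∃ U : Set Z, U ⊆ V ∧ IsOpen U ∧ z₀ ∈ U ∧
      ∀ z ∈ U, IsConnected {g : G | g • z ∈ U}) (z₀ : Z) :
    ∃ U : Set Z, IsOpen U ∧ z₀ ∈ U ∧ ∃ ℓ : Z' → Z → Z',
      (∀ w, π w ∈ U → ContinuousOn (ℓ w) U) ∧
      (∀ w, π w ∈ U → ∀ z ∈ U, π (ℓ w z) = z) ∧
      (∀ w, π w ∈ U → ℓ w (π w) = w) ∧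
      (∀ w, π w ∈ U → IsOpen {x | π x ∈ U ∧ ℓ w (π x) = x}) ∧
      (∀ w x, π w ∈ U → π x ∈ U → ℓ w (π x) = x → ∀ z, ℓ x z = ℓ w z) ∧
      (∀ w, π w ∈ U → ∀ g : G, g • π w ∈ U → ℓ w (g • π w) = g • w) := by
  by_cases hne : Nonempty (π ⁻¹' {z₀})
  swap
  · obtain ⟨-, V, hzV, hVo, -, H, -⟩ := hcov z₀
    obtain ⟨U, hUV, hUopen, hz₀U, -⟩ := hU z₀ V (hVo.mem_nhds hzV)
    have hF : ∀ w : Z', π w ∉ U := fun w hw => hne ⟨(H ⟨w, hUV hw⟩).2⟩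
    refine ⟨U, hUopen, hz₀U, fun w _ => w, ?_, ?_, ?_, ?_, ?_, ?_⟩
    · intro w hw; exact (hF w hw).elim
    · intro w hw; exact (hF w hw).elim
    · intro w hw; exact (hF w hw).elim
    · intro w hw; exact (hF w hw).elim
    · intro w x hw; exact (hF w hw).elim
    · intro w hw; exact (hF w hw).elim
  haveI := hne
  have hd := (hcov z₀).discreteTopology_fiber
  haveI := hd
  obtain ⟨T, hT⟩ : ∃ T : Bundle.Trivialization (π ⁻¹' {z₀}) π, z₀ ∈ T.baseSet :=
    ⟨_, (hcov z₀).mem_toTrivialization_baseSet⟩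
  obtain ⟨U, hUV, hUopen, hz₀U, hconn⟩ := hU z₀ T.baseSet (T.open_baseSet.mem_nhds hT)
  refine ⟨U, hUopen, hz₀U, fun w z => T.toPartialEquiv.symm (z, (T w).2),
    ?_, ?_, ?_, ?_, ?_, ?_⟩
  · intro w hw
    exact T.toOpenPartialHomeomorph.continuousOn_symm.comp
      ((continuous_id.prodMk continuous_const).continuousOn)
      (fun z hz => T.mem_target.mpr (hUV hz))
  · intro w hw z hz
    exact T.proj_symm_apply' (hUV hz)
  · intro w hw
    exact T.symm_apply_mk_proj (T.mem_source.mpr (hUV hw))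
  · intro w hw
    have hset : {x | π x ∈ U ∧ T.toPartialEquiv.symm (π x, (T w).2) = x}
        = T.source ∩ T ⁻¹' (U ×ˢ {(T w).2}) := by
      ext x
      constructor
      · rintro ⟨hxU, hx⟩
        have hxs : x ∈ T.source := T.mem_source.mpr (hUV hxU)
        have : T x = (π x, (T w).2) := by
          conv_lhs => rw [← hx]
          exact T.toPartialEquiv.right_inv (T.mem_target.mpr (hUV hxU))
        refine ⟨hxs, ?_⟩
        rw [Set.mem_preimage, this]
        exact ⟨hxU, rfl⟩
      · rintro ⟨hxs, hmem⟩
        rw [Set.mem_preimage, Set.mem_prod] at hmem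
        obtain ⟨h1, h2⟩ := hmem
        have hfst : (T x).1 = π x := T.coe_fst hxs
        have hxU : π x ∈ U := hfst ▸ h1
        refine ⟨hxU, ?_⟩
        have : (π x, (T w).2) = T x :=
          Prod.ext hfst.symm (Set.mem_singleton_iff.mp h2).symm
        rw [this]
        exact T.toPartialEquiv.left_inv hxs
    rw [hset]
    exact T.continuousOn_toFun.isOpen_inter_preimage T.open_source
      (hUopen.prod (isOpen_discrete _))
  · intro w x hw hx hwx z
    have : T x = (π x, (T w).2) := by
      conv_lhs => rw [← hwx]
      exact T.toPartialEquiv.right_inv (T.mem_target.mpr (hUV hx))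
    have h2 : (T x).2 = (T w).2 := by rw [this]
    exact congrArg (fun c => T.toPartialEquiv.symm (z, c)) h2
  · intro w hw g hg
    have hC : IsConnected {h : G | h • π w ∈ U} := hconn _ hw
    haveI : PreconnectedSpace {h : G | h • π w ∈ U} :=
      Subtype.preconnectedSpace hC.isPreconnected
    have h1 : (1 : G) ∈ {h : G | h • π w ∈ U} := by simpa using hw
    have hgC : g ∈ {h : G | h • π w ∈ U} := hg
    have key := hcov.eq_of_comp_eq (A := {h : G | h • π w ∈ U})
      (g₁ := fun h => (h : G) • w)
      (g₂ := fun h => T.toPartialEquiv.symm ((h : G) • π w, (T w).2))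
      (continuous_subtype_val.smul continuous_const)
      (T.toOpenPartialHomeomorph.continuousOn_symm.comp_continuous
        (((continuous_subtype_val.smul continuous_const)).prodMk continuous_const)
        (fun h => T.mem_target.mpr (hUV h.2)))
      (by
        funext h
        simp only [Function.comp_apply]
        rw [hequiv]
        exact (T.proj_symm_apply' (hUV h.2)).symm)
      ⟨1, h1⟩
      (by
        simp only [one_smul]
        exact (T.symm_apply_mk_proj (T.mem_source.mpr (hUV hw))).symm)
    have := congrFun key ⟨g, hgC⟩
    exact this.symm

/-- Pull-back along the quotient map gives a bijection between continuous sections of the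
induced covering `Z̃/G → Z/G` and `G`-equivariant continuous sections of `π : Z̃ → Z`;
moreover if `G` is connected then every continuous section of `π` is `G`-equivariant. -/
theorem stmt4 {G Z Z' : Type*} [Group G] [TopologicalSpace G] [IsTopologicalGroup G]
    [TopologicalSpace Z] [TopologicalSpace Z']
    [MulAction G Z] [MulAction G Z'] [ContinuousSMul G Z] [ContinuousSMul G Z']
    (π : Z' → Z) (hcov : IsCoveringMap π)
    (hequiv : ∀ (g : G) (z : Z'), π (g • z) = g • π z)
    (hU : ∀ z₀ : Z, ∀ V ∈ nhds z₀, ∃ U : Set Z, U ⊆ V ∧ IsOpen U ∧ z₀ ∈ U ∧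
      ∀ z ∈ U, IsConnected {g : G | g • z ∈ U})
    (πq : Quotient (MulAction.orbitRel G Z') → Quotient (MulAction.orbitRel G Z))
    (hπq : ∀ z : Z', πq (Quotient.mk'' z) = Quotient.mk'' (π z)) :
    -- every `G`-equivariant continuous section of `π` descends to a unique
    -- continuous section of `πq`:
    (∀ s : Z → Z', Continuous s → (∀ z, π (s z) = z) →
        (∀ (g : G) (z : Z), s (g • z) = g • s z) →
      ∃! σ : Quotient (MulAction.orbitRel G Z) → Quotient (MulAction.orbitRel G Z'),
        Continuous σ ∧ (∀ q, πq (σ q) = q) ∧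
          ∀ z : Z, σ (Quotient.mk'' z) = Quotient.mk'' (s z)) ∧
    -- every continuous section of `πq` is the pull-back of a unique `G`-equivariant
    -- continuous section of `π`:
    (∀ σ : Quotient (MulAction.orbitRel G Z) → Quotient (MulAction.orbitRel G Z'),
        Continuous σ → (∀ q, πq (σ q) = q) →
      ∃! s : Z → Z', Continuous s ∧ (∀ z, π (s z) = z) ∧
        (∀ (g : G) (z : Z), s (g • z) = g • s z) ∧
        ∀ z : Z, σ (Quotient.mk'' z) = Quotient.mk'' (s z)) ∧
    -- if `G` is connected, any continuous section of `π` is `G`-equivariant: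
    (ConnectedSpace G → ∀ s : Z → Z', Continuous s → (∀ z, π (s z) = z) →
      ∀ (g : G) (z : Z), s (g • z) = g • s z) := by
  -- uniqueness of a point of a fiber in a given orbit class
  have fiber_unique : ∀ w₁ w₂ : Z', π w₁ = π w₂ →
      (Quotient.mk'' w₁ : Quotient (MulAction.orbitRel G Z')) = Quotient.mk'' w₂ →
      w₁ = w₂ := by
    intro w₁ w₂ hπeq hq
    obtain ⟨g, hg⟩ := MulAction.mem_orbit_iff.mp
      (MulAction.orbitRel_apply.mp (Quotient.eq''.mp hq))
    -- hg : g • w₂ = w₁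
    obtain ⟨U, hop, hz, ℓ, hc, hsec, hself, hopen, hsame, hkey⟩ :=
      stmt4_key π hcov hequiv hU (π w₂)
    have hgU : g • π w₂ ∈ U := by
      rw [← hequiv, hg, hπeq]; exact hz
    have h1 := hkey w₂ hz g hgU
    have h2 : g • π w₂ = π w₂ := by rw [← hequiv, hg, hπeq]
    rw [h2, hself w₂ hz] at h1
    rw [← hg, ← h1]
  refine ⟨?_, ?_, ?_⟩
  · -- Part 1: descend an equivariant section
    intro s hs hsec hequivs
    have hwd : ∀ a b, (MulAction.orbitRel G Z) a b → (MulAction.orbitRel G Z') (s a) (s b) := by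
      intro a b hab
      obtain ⟨g, hg⟩ := MulAction.mem_orbit_iff.mp (MulAction.orbitRel_apply.mp hab)
      refine MulAction.orbitRel_apply.mpr (MulAction.mem_orbit_iff.mpr ⟨g, ?_⟩)
      rw [← hg, hequivs]
    refine ⟨Quotient.map' s hwd, ⟨hs.quotient_map' hwd, ?_, fun z => rfl⟩, ?_⟩
    · intro q
      refine Quotient.inductionOn' q (fun z => ?_)
      rw [Quotient.map'_mk'', hπq, hsec]
    · rintro σ' ⟨_, _, hσ'⟩
      funext q
      refine Quotient.inductionOn' q (fun z => ?_)
      rw [hσ' z, Quotient.map'_mk'']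
  · -- Part 2: lift a section of the quotient covering
    intro σ hσc hσsec
    have hex : ∀ z : Z, ∃ w : Z', π w = z ∧ Quotient.mk'' w = σ (Quotient.mk'' z) := by
      intro z
      obtain ⟨w, hw⟩ := Quotient.exists_rep (σ (Quotient.mk'' z))
      have hw' : Quotient.mk'' w = σ (Quotient.mk'' z) := hw
      have hπw : (Quotient.mk'' (π w) : Quotient (MulAction.orbitRel G Z))
          = Quotient.mk'' z := by
        rw [← hπq, hw']; exact hσsec _
      obtain ⟨g, hg⟩ := MulAction.mem_orbit_iff.mp
        (MulAction.orbitRel_apply.mp (Quotient.eq''.mp hπw))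
      -- hg : g • z = π w
      refine ⟨g⁻¹ • w, by rw [hequiv, ← hg, inv_smul_smul], ?_⟩
      rw [← hw']
      exact Quotient.sound' (MulAction.orbitRel_apply.mpr
        (MulAction.mem_orbit_iff.mpr ⟨g⁻¹, rfl⟩))
    choose s hs1 hs2 using hex
    have hequivs : ∀ (g : G) (z : Z), s (g • z) = g • s z := by
      intro g z
      refine fiber_unique _ _ ?_ ?_
      · rw [hs1, hequiv, hs1]
      · have hmk : (Quotient.mk'' (g • z) : Quotient (MulAction.orbitRel G Z))
            = Quotient.mk'' z :=
          Quotient.sound' (MulAction.orbitRel_apply.mpr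
            (MulAction.mem_orbit_iff.mpr ⟨g, rfl⟩))
        have hmk' : (Quotient.mk'' (g • s z) : Quotient (MulAction.orbitRel G Z'))
            = Quotient.mk'' (s z) :=
          Quotient.sound' (MulAction.orbitRel_apply.mpr
            (MulAction.mem_orbit_iff.mpr ⟨g, rfl⟩))
        rw [hs2, hmk, hmk', hs2]
    have hcont : Continuous s := by
      rw [continuous_iff_continuousAt]
      intro z₀
      obtain ⟨U, hop, hz₀, ℓ, hc, hsecℓ, hself, hopen, hsame, hkey⟩ :=
        stmt4_key π hcov hequiv hU z₀
      have hw₀U : π (s z₀) ∈ U := by rw [hs1]; exact hz₀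
      set w₀ := s z₀ with hw₀
      set S := {x | π x ∈ U ∧ ℓ w₀ (π x) = x} with hS
      have hSopen : IsOpen S := hopen w₀ hw₀U
      have hNopen : IsOpen (Quotient.mk'' '' S :
          Set (Quotient (MulAction.orbitRel G Z'))) := by
        have hqm : Topology.IsQuotientMap (Quotient.mk'' : Z' → Quotient (MulAction.orbitRel G Z')) :=
          isQuotientMap_quot_mk
        rw [← hqm.isOpen_preimage]
        have hpre : (Quotient.mk'' : Z' → Quotient (MulAction.orbitRel G Z')) ⁻¹'
            (Quotient.mk'' '' S) = ⋃ g : G, (g • ·) ⁻¹' S := by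
          ext x
          simp only [Set.mem_preimage, Set.mem_image, Set.mem_iUnion]
          constructor
          · rintro ⟨y, hyS, hyx⟩
            obtain ⟨g, hg⟩ := MulAction.mem_orbit_iff.mp
              (MulAction.orbitRel_apply.mp (Quotient.eq''.mp hyx))
            exact ⟨g, by show g • x ∈ S; rw [hg]; exact hyS⟩
          · rintro ⟨g, hg⟩
            exact ⟨g • x, hg, Quotient.sound' (MulAction.orbitRel_apply.mpr
              (MulAction.mem_orbit_iff.mpr ⟨g, rfl⟩))⟩
        rw [hpre]
        exact isOpen_iUnion fun g => hSopen.preimage (continuous_const_smul g)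
      set A := U ∩ ((fun z => σ (Quotient.mk'' z)) ⁻¹' (Quotient.mk'' '' S)) with hA
      have hAopen : IsOpen A :=
        hop.inter (hNopen.preimage (hσc.comp continuous_quotient_mk'))
      have hz₀A : z₀ ∈ A := by
        refine ⟨hz₀, ?_⟩
        simp only [Set.mem_preimage]
        rw [← hs2 z₀]
        exact ⟨w₀, ⟨hw₀U, hself w₀ hw₀U⟩, rfl⟩
      have hagree : ∀ z ∈ A, s z = ℓ w₀ z := by
        rintro z ⟨hzU, hzN⟩
        obtain ⟨x, ⟨hxU, hxℓ⟩, hxq⟩ := hzN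
        have hq : (Quotient.mk'' (s z) : Quotient (MulAction.orbitRel G Z'))
            = Quotient.mk'' x := by rw [hs2]; exact hxq.symm
        obtain ⟨g, hg⟩ := MulAction.mem_orbit_iff.mp
          (MulAction.orbitRel_apply.mp (Quotient.eq''.mp hq))
        -- hg : g • x = s z
        have hz' : g • π x = z := by rw [← hequiv, hg, hs1]
        have hgx : g • π x ∈ U := by rw [hz']; exact hzU
        have h1 := hkey x hxU g hgx
        rw [hz', hg] at h1
        rw [← h1, hsame w₀ x hw₀U hxU hxℓ z]
      have hℓcont : ContinuousAt (ℓ w₀) z₀ := (hc w₀ hw₀U).continuousAt (hop.mem_nhds hz₀)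
      exact hℓcont.congr (Filter.eventuallyEq_of_mem (hAopen.mem_nhds hz₀A)
        (fun z hz => (hagree z hz).symm))
    refine ⟨s, ⟨hcont, hs1, hequivs, fun z => (hs2 z).symm⟩, ?_⟩
    rintro s' ⟨_, hsec', _, hq'⟩
    funext z
    refine fiber_unique _ _ (by rw [hsec', hs1]) ?_
    rw [hs2]
    exact ((hq' z).symm).symm ▸ (hq' z).symm
  · -- Part 3: connected group forces equivariance
    intro hG s hs hsec g z
    haveI : PreconnectedSpace G := hG.toPreconnectedSpace
    have key := hcov.eq_of_comp_eq (A := G)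
      (g₁ := fun h : G => h⁻¹ • s (h • z)) (g₂ := fun _ : G => s z)
      (continuous_inv.smul (hs.comp (continuous_id.smul continuous_const)))
      continuous_const
      (by
        funext h
        simp only [Function.comp_apply]
        rw [hequiv, hsec, inv_smul_smul, hsec])
      1
      (by simp)
    have h2 := congrFun key g
    rw [← h2, smul_inv_smul]
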